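/- (Compression of an AGSP's coefficients, normalization step) Let α_i = w_i/N with w_i, N positive integers, M = ∑_i w_i, and let K = ∑_i α_i U_i ⊗ V_i with ‖U_i‖, ‖V_i‖ ≤ 1. Define |Φ⟩ = (1/√M)∑_i ∑_{j=1}^{w_i} |i,j⟩_a|i,j⟩_b, SEL_A = ∑_{i,j} |i,j⟩⟨i,j|_a ⊗ U_i, SEL_B = ∑_{i,j}|i,j⟩⟨i,j|_b ⊗ V_i. Then K ⊗ |Φ⟩⟨Φ| = (M/N) · ( (I⊗I⊗|Φ⟩⟨Φ|) (SEL_A ⊗ SEL_B) (I⊗I⊗|Φ⟩⟨Φ|) ), with the registers ordered so that SEL_A acts on (a, A) and SEL_B acts on (b, B). -/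

import Mathlib

/-- The Euclidean (ℓ²) norm of a finitely-supported complex vector. -/
noncomputable def enorm' {ι : Type*} [Fintype ι] (v : ι → ℂ) : ℝ :=
  Real.sqrt (∑ i, ‖v i‖ ^ 2)

/-- Compression of an AGSP's coefficients, normalization step: with
`α_i = w_i/N`, `M = ∑ w_i`, `K = ∑ α_i U_i ⊗ V_i` (contractions `U_i, V_i`),
`|Φ⟩ = (1/√M) ∑_{i,j} |i,j⟩_a|i,j⟩_b` and the controlled-unitary operators
`SEL_A ⊗ SEL_B`, one has
`K ⊗ |Φ⟩⟨Φ| = (M/N) · (I ⊗ |Φ⟩⟨Φ|)(SEL_A ⊗ SEL_B)(I ⊗ |Φ⟩⟨Φ|)`. -/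
theorem stmt_17 {m dA dB N : ℕ} (hN : 0 < N) (w : Fin m → ℕ) (hw : ∀ i, 0 < w i)
    (U : Fin m → Matrix (Fin dA) (Fin dA) ℂ) (V : Fin m → Matrix (Fin dB) (Fin dB) ℂ)
    (hU : ∀ (i) (v : Fin dA → ℂ), enorm' ((U i).mulVec v) ≤ enorm' v)
    (hV : ∀ (i) (v : Fin dB → ℂ), enorm' ((V i).mulVec v) ≤ enorm' v) :
    let J := Σ i : Fin m, Fin (w i)
    let Mtot : ℕ := ∑ i, w i
    let Φ : J × J → ℂ := fun x => if x.1 = x.2 then (((Real.sqrt Mtot)⁻¹ : ℝ) : ℂ) else 0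
    -- `I_{AB} ⊗ |Φ⟩⟨Φ|`
    let P : Matrix ((Fin dA × Fin dB) × (J × J)) ((Fin dA × Fin dB) × (J × J)) ℂ :=
      Matrix.of fun r c => (if r.1 = c.1 then 1 else 0) * (Φ r.2 * (starRingEnd ℂ) (Φ c.2))
    -- `SEL_A ⊗ SEL_B`
    let SEL : Matrix ((Fin dA × Fin dB) × (J × J)) ((Fin dA × Fin dB) × (J × J)) ℂ :=
      Matrix.of fun r c => if r.2.1 = c.2.1 ∧ r.2.2 = c.2.2 then
        U r.2.1.1 r.1.1 c.1.1 * V r.2.2.1 r.1.2 c.1.2 else 0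
    -- `K ⊗ |Φ⟩⟨Φ|` with `K = ∑_i (w_i/N) U_i ⊗ V_i`
    let KΦ : Matrix ((Fin dA × Fin dB) × (J × J)) ((Fin dA × Fin dB) × (J × J)) ℂ :=
      Matrix.of fun r c =>
        (∑ i, ((w i : ℂ) / (N : ℂ)) * U i r.1.1 c.1.1 * V i r.1.2 c.1.2)
          * (Φ r.2 * (starRingEnd ℂ) (Φ c.2))
    KΦ = ((Mtot : ℂ) / (N : ℂ)) • (P * SEL * P) := by
  intro J Mtot Φ P SEL KΦ
  ext r c
  have hΦdiag : ∀ x : J × J, Φ x = if x.1 = x.2 then (((Real.sqrt Mtot)⁻¹ : ℝ) : ℂ) else 0 :=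
    fun _ => rfl
  simp only [Matrix.mul_apply, Matrix.smul_apply, Matrix.of_apply, smul_eq_mul, P, SEL, KΦ]
  simp only [hΦdiag, Fintype.sum_prod_type, apply_ite (starRingEnd ℂ), map_zero,
    Complex.conj_ofReal, ite_and, ite_mul, mul_ite, zero_mul, mul_zero, one_mul, mul_one,
    Finset.sum_ite_eq, Finset.sum_ite_eq', Finset.mem_univ, if_true, Prod.ext_iff, Prod.mk.injEq, Finset.sum_ite_irrel, Finset.sum_const_zero]
  have hM0 : 0 < Mtot := by
    calc 0 < w r.2.1.1 := hw _
    _ ≤ Mtot := Finset.single_le_sum (fun i _ => Nat.zero_le _) (Finset.mem_univ _)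
  have ha : ((((Real.sqrt Mtot)⁻¹ : ℝ)) : ℂ) * ((((Real.sqrt Mtot)⁻¹ : ℝ)) : ℂ)
      = (((Mtot : ℝ)⁻¹ : ℝ) : ℂ) := by
    rw [← Complex.ofReal_mul, ← Real.sqrt_inv, Real.mul_self_sqrt (by positivity)]
  split_ifs with h1 h2
  · rw [← Finset.univ_sigma_univ, Finset.sum_sigma]
    simp only [ha, Finset.sum_const, Finset.card_univ, Fintype.card_fin, nsmul_eq_mul]
    rw [Finset.sum_mul, Finset.mul_sum]
    refine Finset.sum_congr rfl fun i _ => ?_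
    have hMne : ((Mtot : ℕ) : ℂ) ≠ 0 := by exact_mod_cast hM0.ne'
    have hNne : ((N : ℕ) : ℂ) ≠ 0 := by exact_mod_cast hN.ne'
    push_cast
    field_simp
  · rfl
  · rfl
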